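/- Let A be the Hankel tensor of order 4 and dimension 3 with generating vector v = (v_0,…,v_8) given by v_0 = 1, v_1 = −1, v_2 = 1, and v_3 = v_4 = ⋯ = v_8 = 0. Then A is Vandermonde positive semi-definite (A u^4 ≥ 0 for every Vandermonde vector u = (1, μ, μ²)), but A is not positive semi-definite; in particular, for x = (1, 1, −1) one has A x^4 = −1 < 0. -/

import Mathlib

open Finset

/-- `A x^m = ∑_{i_1,…,i_m} a_{i_1⋯i_m} x_{i_1}⋯x_{i_m}` for an order `m` dimension `n` tensor. -/
noncomputable def tApply (m n : ℕ) (a : (Fin m → Fin n) → ℝ) (x : Fin n → ℝ) : ℝ :=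
  ∑ i : Fin m → Fin n, a i * ∏ j, x (i j)

/-- An (even order) tensor is positive semi-definite if `A x^m ≥ 0` for all `x`. -/
def IsPSD (m n : ℕ) (a : (Fin m → Fin n) → ℝ) : Prop :=
  ∀ x : Fin n → ℝ, 0 ≤ tApply m n a x

/-- The Hankel tensor of order `m` and dimension `n` generated by `v`:
entries `a_{i_1⋯i_m} = v_{i_1+⋯+i_m-m}` (indices here are 0-based). -/
def hankelT (m n : ℕ) (v : ℕ → ℝ) : (Fin m → Fin n) → ℝ :=
  fun i => v (∑ j, (i j : ℕ))

/-- `s(k,m,n)`: the number of index tuples `(i_1,…,i_m) ∈ [n]^m` with `i_1+⋯+i_m-m = k`. -/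
def sCount (m n k : ℕ) : ℕ :=
  (Finset.univ.filter (fun i : Fin m → Fin n => ∑ j, (i j : ℕ) = k)).card

/-- A tensor is Vandermonde positive semi-definite if `A u^m ≥ 0` for every Vandermonde
vector `u = (1, μ, μ², …, μ^{n-1})`. -/
def IsVPSD (m n : ℕ) (a : (Fin m → Fin n) → ℝ) : Prop :=
  ∀ μ : ℝ, 0 ≤ tApply m n a (fun l => μ ^ (l : ℕ))


set_option maxRecDepth 10000 in
private lemma sum_fun4' (g : (Fin 4 → Fin 3) → ℝ) :
    ∑ f : Fin 4 → Fin 3, g f =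
      ∑ a : Fin 3, ∑ b : Fin 3, ∑ c : Fin 3, ∑ d : Fin 3, g ![a,b,c,d] := by
  rw [← Fintype.sum_bijective (fun p : Fin 3 × Fin 3 × Fin 3 × Fin 3 => ![p.1, p.2.1, p.2.2.1, p.2.2.2])
    (by decide) _ g (fun p => rfl)]
  simp [Fintype.sum_prod_type]

private lemma tApply_eval (x : Fin 3 → ℝ) :
    tApply 4 3 (hankelT 4 3 (fun k => if k = 0 then 1 else if k = 1 then -1 else if k = 2 then 1 else 0)) x
    = x 0 ^ 4 - 4 * x 0 ^ 3 * x 1 + 6 * x 0 ^ 2 * x 1 ^ 2 + 4 * x 0 ^ 3 * x 2 := by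
  rw [tApply, sum_fun4']
  simp only [hankelT, Fin.sum_univ_four, Fin.prod_univ_four, Fin.sum_univ_three,
    Matrix.cons_val_zero, Matrix.cons_val_one, Matrix.head_cons, Matrix.cons_val_two,
    Matrix.tail_cons, Matrix.cons_val_three]
  norm_num
  ring

/-- Example 4.1: the order 4, dimension 3 Hankel tensor generated by
`v = (1, -1, 1, 0, …, 0)` is Vandermonde positive semi-definite but not positive
semi-definite; in particular `A x^4 = -1` for `x = (1, 1, -1)`. -/
theorem stmt_17 :
    IsVPSD 4 3 (hankelT 4 3 (fun k => if k = 0 then 1 else if k = 1 then -1 else if k = 2 then 1 else 0)) ∧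
    ¬ IsPSD 4 3 (hankelT 4 3 (fun k => if k = 0 then 1 else if k = 1 then -1 else if k = 2 then 1 else 0)) ∧
    tApply 4 3 (hankelT 4 3 (fun k => if k = 0 then 1 else if k = 1 then -1 else if k = 2 then 1 else 0)) ![1, 1, -1] = -1 := by
  refine ⟨?_, ?_, ?_⟩
  · intro μ
    rw [tApply_eval]
    norm_num
    nlinarith [sq_nonneg (5 * μ - 1)]
  · intro h
    have h1 := h ![1, 1, -1]
    rw [tApply_eval] at h1
    norm_num [Matrix.cons_val_two, Matrix.tail_cons, Matrix.head_cons] at h1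
  · rw [tApply_eval]
    norm_num [Matrix.cons_val_two, Matrix.tail_cons, Matrix.head_cons]
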